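/- Let a be an n×n complex matrix and let L(ρ) = −i[H,ρ] + Σ_μ D_{L_μ}(ρ) + D_a(ρ) be a Lindblad generator (including the dissipator D_a) whose restriction to the subspace of traceless matrices is injective, and let ρ̄ be a density matrix with L(ρ̄) = 0. Set Y = ρ̄a† − tr(ρ̄a†)ρ̄ (which is traceless). Then the unique traceless matrix X with L(X) = Y satisfies ker(ρ̄) ⊆ ker(X). -/

import Mathlib

open scoped Matrix ComplexOrder

/-- The dissipator `D_X(ρ) = XρX† − (1/2)(X†Xρ + ρX†X)`. -/
noncomputable def dissipator {n : ℕ} (X ρ : Matrix (Fin n) (Fin n) ℂ) :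
    Matrix (Fin n) (Fin n) ℂ :=
  X * ρ * Xᴴ - (1 / 2 : ℂ) • (Xᴴ * X * ρ + ρ * (Xᴴ * X))

section helpers

open Matrix

lemma stmt5_sum_mulVec {n : ℕ} {ι : Type*} (s : Finset ι)
    (f : ι → Matrix (Fin n) (Fin n) ℂ) (v : Fin n → ℂ) :
    (∑ μ ∈ s, f μ) *ᵥ v = ∑ μ ∈ s, f μ *ᵥ v := by
  classical
  induction s using Finset.induction with
  | empty => simp
  | insert _ _ h ih => simp [Finset.sum_insert h, Matrix.add_mulVec, ih]

lemma stmt5_mulVec_sum {n : ℕ} {ι : Type*} (s : Finset ι)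
    (A : Matrix (Fin n) (Fin n) ℂ) (f : ι → Fin n → ℂ) :
    A *ᵥ (∑ μ ∈ s, f μ) = ∑ μ ∈ s, A *ᵥ f μ := by
  classical
  induction s using Finset.induction with
  | empty => simp
  | insert _ _ h ih => simp [Finset.sum_insert h, Matrix.mulVec_add, ih]

lemma stmt5_dotProduct_sum {n : ℕ} {ι : Type*} (s : Finset ι)
    (u : Fin n → ℂ) (f : ι → Fin n → ℂ) :
    u ⬝ᵥ (∑ μ ∈ s, f μ) = ∑ μ ∈ s, u ⬝ᵥ f μ := by
  classical
  induction s using Finset.induction with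
  | empty => simp
  | insert _ _ h ih => simp [Finset.sum_insert h, dotProduct_add, ih]

/-- The dissipator as a linear map. -/
noncomputable def dissL {n : ℕ} (X : Matrix (Fin n) (Fin n) ℂ) :
    Matrix (Fin n) (Fin n) ℂ →ₗ[ℂ] Matrix (Fin n) (Fin n) ℂ :=
  (LinearMap.mulRight ℂ Xᴴ).comp (LinearMap.mulLeft ℂ X)
    - (1 / 2 : ℂ) • (LinearMap.mulLeft ℂ (Xᴴ * X) + LinearMap.mulRight ℂ (Xᴴ * X))

lemma dissL_apply {n : ℕ} (X ρ : Matrix (Fin n) (Fin n) ℂ) :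
    dissL X ρ = dissipator X ρ := by
  simp [dissL, dissipator, LinearMap.sub_apply, LinearMap.smul_apply,
    LinearMap.add_apply, LinearMap.mulLeft_apply, LinearMap.mulRight_apply, mul_assoc]

/-- The Lindblad generator as a linear map. -/
noncomputable def lindbladL {n m : ℕ} (H a : Matrix (Fin n) (Fin n) ℂ)
    (Lop : Fin m → Matrix (Fin n) (Fin n) ℂ) :
    Matrix (Fin n) (Fin n) ℂ →ₗ[ℂ] Matrix (Fin n) (Fin n) ℂ :=
  (-Complex.I) • (LinearMap.mulLeft ℂ H - LinearMap.mulRight ℂ H)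
    + ∑ μ, dissL (Lop μ) + dissL a

lemma lindbladL_apply {n m : ℕ} (H a : Matrix (Fin n) (Fin n) ℂ)
    (Lop : Fin m → Matrix (Fin n) (Fin n) ℂ) (ρ : Matrix (Fin n) (Fin n) ℂ) :
    lindbladL H a Lop ρ
      = (-Complex.I) • (H * ρ - ρ * H) + ∑ μ, dissipator (Lop μ) ρ + dissipator a ρ := by
  simp [lindbladL, dissL_apply, LinearMap.sum_apply]

end helpers

/-- let `L(ρ) = −i[H,ρ] + Σ_μ D_{L_μ}(ρ) + D_a(ρ)` be a Lindblad generator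
whose restriction to traceless matrices is injective, `ρ̄` a density matrix with
`L(ρ̄) = 0`, and `Y = ρ̄a† − tr(ρ̄a†)ρ̄`. Then the (unique) traceless `X` with
`L(X) = Y` satisfies `ker ρ̄ ⊆ ker X`. -/
theorem stmt5 {n m : ℕ} (a : Matrix (Fin n) (Fin n) ℂ)
    (L : Matrix (Fin n) (Fin n) ℂ → Matrix (Fin n) (Fin n) ℂ)
    (H : Matrix (Fin n) (Fin n) ℂ) (hH : H.IsHermitian)
    (Lop : Fin m → Matrix (Fin n) (Fin n) ℂ)
    (hL : ∀ ρ, L ρ = (-Complex.I) • (H * ρ - ρ * H) + ∑ μ, dissipator (Lop μ) ρ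
      + dissipator a ρ)
    (hinj : ∀ X Y : Matrix (Fin n) (Fin n) ℂ,
      X.trace = 0 → Y.trace = 0 → L X = L Y → X = Y)
    (ρbar : Matrix (Fin n) (Fin n) ℂ) (hpsd : ρbar.PosSemidef) (htr : ρbar.trace = 1)
    (hstat : L ρbar = 0)
    (X : Matrix (Fin n) (Fin n) ℂ) (hXtr : X.trace = 0)
    (hX : L X = ρbar * aᴴ - (ρbar * aᴴ).trace • ρbar) :
    ∀ v : Fin n → ℂ, ρbar.mulVec v = 0 → X.mulVec v = 0 := by
  intro v0 hv0
  have hLm : ∀ ρ, lindbladL H a Lop ρ = L ρ := fun ρ => by rw [hL, lindbladL_apply]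
  -- `star v ⬝ᵥ ρbar *ᵥ w = 0` when `ρbar *ᵥ v = 0`
  have hvleft : ∀ v, ρbar *ᵥ v = 0 → ∀ w, star v ⬝ᵥ ρbar *ᵥ w = 0 := by
    intro v hv w
    rw [Matrix.dotProduct_mulVec]
    have h : star v ᵥ* ρbar = 0 := by
      conv_lhs => rw [← hpsd.1]
      rw [Matrix.vecMul_conjTranspose, star_star, hv, star_zero]
    rw [h, zero_dotProduct]
  -- Step 1: the kernel of ρbar is invariant under aᴴ and (Lop μ)ᴴ
  have step1 : ∀ v, ρbar *ᵥ v = 0 →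
      ρbar *ᵥ (aᴴ *ᵥ v) = 0 ∧ ∀ μ, ρbar *ᵥ ((Lop μ)ᴴ *ᵥ v) = 0 := by
    intro v hv
    have hzero : star v ⬝ᵥ (L ρbar) *ᵥ v = 0 := by
      rw [hstat, Matrix.zero_mulVec, dotProduct_zero]
    have hTA : ∀ A : Matrix (Fin n) (Fin n) ℂ, star v ⬝ᵥ (A * ρbar) *ᵥ v = 0 := by
      intro A
      rw [← Matrix.mulVec_mulVec, hv, Matrix.mulVec_zero, dotProduct_zero]
    have hTB : ∀ B : Matrix (Fin n) (Fin n) ℂ, star v ⬝ᵥ (ρbar * B) *ᵥ v = 0 := by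
      intro B
      rw [← Matrix.mulVec_mulVec]
      exact hvleft v hv _
    have hT2 : ∀ A : Matrix (Fin n) (Fin n) ℂ,
        star v ⬝ᵥ (A * ρbar * Aᴴ) *ᵥ v = star (Aᴴ *ᵥ v) ⬝ᵥ ρbar *ᵥ (Aᴴ *ᵥ v) := by
      intro A
      rw [← Matrix.mulVec_mulVec, ← Matrix.mulVec_mulVec, Matrix.dotProduct_mulVec]
      congr 1
      rw [Matrix.star_mulVec, Matrix.conjTranspose_conjTranspose]
    have expand : star v ⬝ᵥ (L ρbar) *ᵥ v
        = (∑ μ, star ((Lop μ)ᴴ *ᵥ v) ⬝ᵥ ρbar *ᵥ ((Lop μ)ᴴ *ᵥ v))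
          + star (aᴴ *ᵥ v) ⬝ᵥ ρbar *ᵥ (aᴴ *ᵥ v) := by
      rw [hL]
      simp only [dissipator, Matrix.add_mulVec, Matrix.sub_mulVec,
        Matrix.smul_mulVec, stmt5_sum_mulVec, dotProduct_add,
        dotProduct_sub, dotProduct_smul, stmt5_dotProduct_sum,
        hTA, hTB, hT2, smul_eq_mul, mul_zero, sub_zero, zero_sub, add_zero,
        zero_add, sub_self, neg_zero, smul_zero]
    have hsum : (∑ μ, star ((Lop μ)ᴴ *ᵥ v) ⬝ᵥ ρbar *ᵥ ((Lop μ)ᴴ *ᵥ v))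
        + star (aᴴ *ᵥ v) ⬝ᵥ ρbar *ᵥ (aᴴ *ᵥ v) = 0 := by
      rw [← expand]; exact hzero
    have hnnA : (0:ℂ) ≤ star (aᴴ *ᵥ v) ⬝ᵥ ρbar *ᵥ (aᴴ *ᵥ v) := hpsd.dotProduct_mulVec_nonneg _
    have hnnS : (0:ℂ) ≤ ∑ μ, star ((Lop μ)ᴴ *ᵥ v) ⬝ᵥ ρbar *ᵥ ((Lop μ)ᴴ *ᵥ v) :=
      Finset.sum_nonneg fun μ _ => hpsd.dotProduct_mulVec_nonneg _
    obtain ⟨hS0, hA0⟩ := (add_eq_zero_iff_of_nonneg hnnS hnnA).mp hsum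
    refine ⟨(hpsd.dotProduct_mulVec_zero_iff _).mp hA0, fun μ => ?_⟩
    have := (Finset.sum_eq_zero_iff_of_nonneg (fun μ _ => hpsd.dotProduct_mulVec_nonneg _)).mp hS0 μ
      (Finset.mem_univ μ)
    exact (hpsd.dotProduct_mulVec_zero_iff _).mp this
  -- abbreviation for the "K† v" vector
  set S : Matrix (Fin n) (Fin n) ℂ := (∑ μ, (Lop μ)ᴴ * Lop μ) + aᴴ * a with hS
  -- the core computation
  have comp : ∀ (ρ : Matrix (Fin n) (Fin n) ℂ) (u : Fin n → ℂ), ρ *ᵥ u = 0 →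
      (∀ μ, ρ *ᵥ ((Lop μ)ᴴ *ᵥ u) = 0) → ρ *ᵥ (aᴴ *ᵥ u) = 0 →
      (L ρ) *ᵥ u = ρ *ᵥ (Complex.I • (H *ᵥ u) - (1 / 2 : ℂ) • (S *ᵥ u)) := by
    intro ρ u h1 h2 h3
    rw [hL, hS]
    simp only [Matrix.add_mulVec, Matrix.sub_mulVec, Matrix.smul_mulVec,
      stmt5_sum_mulVec, stmt5_mulVec_sum, Matrix.mulVec_add, Matrix.mulVec_sub,
      Matrix.mulVec_smul, dissipator, ← Matrix.mulVec_mulVec, h1, h2, h3,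
      Matrix.mulVec_zero, smul_zero, sub_zero, zero_sub, add_zero, zero_add,
      Finset.sum_const_zero, Matrix.neg_mulVec, smul_add, Finset.smul_sum, Finset.sum_neg_distrib,
      neg_smul, smul_neg, neg_neg]
    abel
  -- Step 2: the kernel of ρbar is invariant under I•H - (1/2)•S
  have step2 : ∀ v, ρbar *ᵥ v = 0 →
      ρbar *ᵥ (Complex.I • (H *ᵥ v) - (1 / 2 : ℂ) • (S *ᵥ v)) = 0 := by
    intro v hv
    obtain ⟨ha', hl'⟩ := step1 v hv
    have h := comp ρbar v hv hl' ha'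
    rw [hstat, Matrix.zero_mulVec] at h
    exact h.symm
  -- the submodule of traceless matrices vanishing on ker ρbar
  let V₀ : Submodule ℂ (Matrix (Fin n) (Fin n) ℂ) :=
  { carrier := {ρ | ρ.trace = 0 ∧ ∀ u, ρbar *ᵥ u = 0 → ρ *ᵥ u = 0}
    add_mem' := by
      rintro x y ⟨hx1, hx2⟩ ⟨hy1, hy2⟩
      refine ⟨by rw [Matrix.trace_add, hx1, hy1, add_zero], fun u hu => ?_⟩
      rw [Matrix.add_mulVec, hx2 u hu, hy2 u hu, add_zero]
    zero_mem' := ⟨by simp, fun u _ => Matrix.zero_mulVec u⟩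
    smul_mem' := by
      rintro c x ⟨hx1, hx2⟩
      refine ⟨by rw [Matrix.trace_smul, hx1, smul_zero], fun u hu => ?_⟩
      rw [Matrix.smul_mulVec, hx2 u hu, smul_zero] }
  -- L has zero trace
  have htrace : ∀ ρ : Matrix (Fin n) (Fin n) ℂ, (L ρ).trace = 0 := by
    intro ρ
    have hd : ∀ Z : Matrix (Fin n) (Fin n) ℂ, (dissipator Z ρ).trace = 0 := by
      intro Z
      simp only [dissipator, Matrix.trace_sub, Matrix.trace_smul, Matrix.trace_add]
      rw [Matrix.trace_mul_cycle Z ρ Zᴴ, Matrix.trace_mul_comm ρ (Zᴴ * Z)]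
      simp only [smul_eq_mul, mul_assoc]
      ring
    rw [hL]
    simp only [Matrix.trace_add, Matrix.trace_smul, Matrix.trace_sub,
      Matrix.trace_sum, hd, Matrix.trace_mul_comm H ρ, sub_self, smul_zero,
      Finset.sum_const_zero, add_zero, zero_add]
  -- L maps V₀ into V₀
  have hmem : ∀ x ∈ V₀, lindbladL H a Lop x ∈ V₀ := by
    rintro x ⟨hx1, hx2⟩
    rw [hLm]
    refine ⟨htrace x, fun u hu => ?_⟩
    obtain ⟨ha', hl'⟩ := step1 u hu
    have h := comp x u (hx2 u hu) (fun μ => hx2 _ (hl' μ)) (hx2 _ ha')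
    rw [h, hx2 _ (step2 u hu)]
  let f : V₀ →ₗ[ℂ] V₀ := (lindbladL H a Lop).restrict hmem
  have finj : Function.Injective f := by
    rintro ⟨x, hx⟩ ⟨y, hy⟩ hxy
    have : lindbladL H a Lop x = lindbladL H a Lop y := congrArg Subtype.val hxy
    rw [hLm, hLm] at this
    exact Subtype.ext (hinj x y hx.1 hy.1 this)
  have fsurj : Function.Surjective f := LinearMap.injective_iff_surjective.mp finj
  -- Y is in V₀
  have hY : (ρbar * aᴴ - (ρbar * aᴴ).trace • ρbar) ∈ V₀ := by
    refine ⟨?_, fun u hu => ?_⟩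
    · rw [Matrix.trace_sub, Matrix.trace_smul, htr, smul_eq_mul, mul_one, sub_self]
    · rw [Matrix.sub_mulVec, Matrix.smul_mulVec, hu, smul_zero,
        ← Matrix.mulVec_mulVec, (step1 u hu).1, sub_zero]
  obtain ⟨X', hX'⟩ := fsurj ⟨_, hY⟩
  have hX'val : lindbladL H a Lop X'.val = ρbar * aᴴ - (ρbar * aᴴ).trace • ρbar :=
    congrArg Subtype.val hX'
  have hXeq : X = X'.val := by
    refine hinj X X'.val hXtr X'.2.1 ?_
    rw [hX, ← hLm, hX'val]
  rw [hXeq]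
  exact X'.2.2 v0 hv0
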